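/- For each integer t ≥ 3, there exists a constant C = C(t) > 0 such that every two-colouring (red/blue) of the edges of the complete graph K_n on n ≥ C vertices in which each colour appears on at least C·n^{-1/t}·n² = C·n^{2-1/t} edges contains an unavoidable t-colouring. -/

import Mathlib

open Finset
attribute [local instance] Classical.propDecidable


/-- A two-coloured complete graph (red graph `R`, blue graph `Rᶜ`) contains an
unavoidable `t`-colouring: there are disjoint `t`-sets `X`, `Y` such that one of
the colours `G ∈ {R, Rᶜ}` forms either the clique on `X` alone, or the two disjoint
cliques on `X` and on `Y`, with all remaining edges among `X ∪ Y` of the other colour. -/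
def ContainsUnavoidable {V : Type*} (R : SimpleGraph V) (t : ℕ) : Prop :=
  ∃ X Y : Finset V, Disjoint X Y ∧ X.card = t ∧ Y.card = t ∧
    ∃ G : SimpleGraph V, (G = R ∨ G = Rᶜ) ∧
      G.IsClique (X : Set V) ∧
      (G.IsClique (Y : Set V) ∨ Gᶜ.IsClique (Y : Set V)) ∧
      ∀ x ∈ X, ∀ y ∈ Y, Gᶜ.Adj x y


/-- Ramsey property: any graph `G` and any finset `W` with at least `N` vertices contains
a `G`-clique of size `a` or a `Gᶜ`-clique of size `b` inside `W`. -/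
def RamseyWitness (a b N : ℕ) : Prop :=
  ∀ (V : Type) (G : SimpleGraph V) (W : Finset V), N ≤ W.card →
    (∃ A ⊆ W, A.card = a ∧ G.IsClique (A : Set V)) ∨
    (∃ B ⊆ W, B.card = b ∧ Gᶜ.IsClique (B : Set V))

lemma ramseyWitness_zero_left (b : ℕ) : RamseyWitness 0 b 0 := by
  intro V G W _
  exact Or.inl ⟨∅, empty_subset _, card_empty, by simp⟩

lemma ramseyWitness_zero_right (a : ℕ) : RamseyWitness a 0 0 := by
  intro V G W _
  exact Or.inr ⟨∅, empty_subset _, card_empty, by simp⟩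

lemma ramsey_exists : ∀ (k a b : ℕ), a + b ≤ k → ∃ N, RamseyWitness a b N := by
  intro k
  induction k with
  | zero =>
    intro a b h
    have ha : a = 0 := by omega
    exact ⟨0, ha ▸ ramseyWitness_zero_left b⟩
  | succ k ih =>
    intro a b h
    match a, b with
    | 0, b => exact ⟨0, ramseyWitness_zero_left b⟩
    | a+1, 0 => exact ⟨0, ramseyWitness_zero_right (a+1)⟩
    | a+1, b+1 =>
      obtain ⟨N₁, h₁⟩ := ih a (b+1) (by omega)
      obtain ⟨N₂, h₂⟩ := ih b (a+1) (by omega)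
      refine ⟨N₁ + N₂ + 1, ?_⟩
      intro V G W hW
      have hWne : W.Nonempty := card_pos.1 (by omega)
      obtain ⟨x, hx⟩ := hWne
      set W' := W.erase x with hW'
      have hW'card : N₁ + N₂ ≤ W'.card := by
        rw [hW', Finset.card_erase_of_mem hx]
        omega
      set Nb := W'.filter (fun y => G.Adj x y) with hNb
      set Nc := W'.filter (fun y => ¬ G.Adj x y) with hNc
      have hsplit : Nb.card + Nc.card = W'.card := card_filter_add_card_filter_not _
      rcases le_or_gt N₁ Nb.card with hcase | hcase
      · rcases h₁ V G Nb hcase with ⟨A, hAsub, hAcard, hAclique⟩ | ⟨B, hBsub, hBcard, hBclique⟩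
        · -- extend A with x
          have hxA : x ∉ A := fun hmem => (Finset.notMem_erase x W)
            (Finset.mem_of_mem_filter x (hAsub hmem))
          refine Or.inl ⟨insert x A, ?_, ?_, ?_⟩
          · intro y hy
            rcases Finset.mem_insert.1 hy with rfl | hy
            · exact hx
            · exact (Finset.erase_subset x W) (Finset.mem_of_mem_filter y (hAsub hy))
          · rw [Finset.card_insert_of_notMem hxA, hAcard]
          · rw [Finset.coe_insert]
            refine hAclique.insert (fun b hb _ => ?_)
            exact (Finset.mem_filter.1 (hAsub hb)).2
        · exact Or.inr ⟨B, hBsub.trans ((filter_subset _ _).trans (erase_subset _ _)), hBcard, hBclique⟩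
      · have hcase2 : N₂ ≤ Nc.card := by omega
        rcases h₂ V Gᶜ Nc hcase2 with ⟨A, hAsub, hAcard, hAclique⟩ | ⟨B, hBsub, hBcard, hBclique⟩
        · -- A is a Gᶜ-clique of size b; extend with x
          have hxA : x ∉ A := fun hmem => (Finset.notMem_erase x W)
            (Finset.mem_of_mem_filter x (hAsub hmem))
          refine Or.inr ⟨insert x A, ?_, ?_, ?_⟩
          · intro y hy
            rcases Finset.mem_insert.1 hy with rfl | hy
            · exact hx
            · exact (Finset.erase_subset x W) (Finset.mem_of_mem_filter y (hAsub hy))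
          · rw [Finset.card_insert_of_notMem hxA, hAcard]
          · rw [Finset.coe_insert]
            refine hAclique.insert (fun b hb hne => ?_)
            have hb' := Finset.mem_filter.1 (hAsub hb)
            exact ⟨hne, hb'.2⟩
        · refine Or.inl ⟨B, hBsub.trans ((filter_subset _ _).trans (erase_subset _ _)), hBcard, ?_⟩
          rwa [compl_compl] at hBclique


variable {n : ℕ}

/-- Common neighbourhood of a finset `T` in `G`. -/
noncomputable def cN (G : SimpleGraph (Fin n)) (T : Finset (Fin n)) : Finset (Fin n) :=
  univ.filter fun v => ∀ x ∈ T, G.Adj x v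

lemma mem_cN {G : SimpleGraph (Fin n)} {T : Finset (Fin n)} {v : Fin n} :
    v ∈ cN G T ↔ ∀ x ∈ T, G.Adj x v := by simp [cN]

lemma disjoint_cN {G : SimpleGraph (Fin n)} {T : Finset (Fin n)} :
    Disjoint T (cN G T) := by
  rw [Finset.disjoint_left]
  intro x hxT hxc
  exact G.irrefl (mem_cN.1 hxc x hxT)

/-- counts: number of `t`-tuples landing in a finset `s` is `s.card ^ t`. -/
lemma card_tuples_mem (t : ℕ) (s : Finset (Fin n)) :
    ((univ : Finset (Fin t → Fin n)).filter fun f => ∀ i, f i ∈ s).card = s.card ^ t := by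
  have h1 : ((univ : Finset (Fin t → Fin n)).filter fun f => ∀ i, f i ∈ s).card
      = Fintype.card {f : Fin t → Fin n // ∀ i, f i ∈ s} := (Fintype.card_subtype _).symm
  rw [h1]
  have e : {f : Fin t → Fin n // ∀ i, f i ∈ s} ≃ (Fin t → {x : Fin n // x ∈ s}) :=
    Equiv.subtypePiEquivPi (p := fun _ x => x ∈ s)
  rw [Fintype.card_congr e, Fintype.card_fun]
  simp [Fintype.card_coe]

/-- Dependent random choice, counting version over ℕ. -/
lemma drc (G : SimpleGraph (Fin n)) (t M u : ℕ) (ht : 0 < t) (hn : 0 < n)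
    (hsum : u * n ^ t + M ^ t * n ^ t ≤ ∑ v : Fin n, (G.degree v) ^ t) :
    ∃ U : Finset (Fin n), u ≤ U.card ∧
      ∀ T ⊆ U, T.card = t → M ≤ (cN G T).card := by
  classical
  have key : ∀ T : Finset (Fin n),
      ((univ : Finset (Fin t → Fin n)).filter fun f => ∀ x ∈ T, ∀ i, G.Adj x (f i)).card
        = (cN G T).card ^ t := by
    intro T
    rw [← card_tuples_mem t (cN G T)]
    congr 1
    ext f
    simp only [mem_filter, mem_univ, true_and, mem_cN]
    exact ⟨fun h i x hx => h x hx i, fun h x hx i => h i x hx⟩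
  -- sum of |Uf| over all tuples equals sum of degrees to the t
  have hsum1 : ∑ f : Fin t → Fin n,
      ((univ : Finset (Fin n)).filter (fun v => ∀ i, G.Adj v (f i))).card
      = ∑ v : Fin n, (G.degree v) ^ t := by
    have h1 : ∀ f : Fin t → Fin n,
        ((univ : Finset (Fin n)).filter (fun v => ∀ i, G.Adj v (f i))).card
        = ∑ v : Fin n, if ∀ i, G.Adj v (f i) then 1 else 0 := fun f => Finset.card_filter _ _
    rw [Finset.sum_congr rfl (fun f _ => h1 f), Finset.sum_comm]
    refine Finset.sum_congr rfl (fun v _ => ?_)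
    have h2 : (∑ f : Fin t → Fin n, if ∀ i, G.Adj v (f i) then 1 else 0)
        = ((univ : Finset (Fin t → Fin n)).filter fun f => ∀ i, f i ∈ G.neighborFinset v).card := by
      rw [Finset.card_filter]
      refine Finset.sum_congr rfl (fun f _ => ?_)
      congr 1
      simp only [eq_iff_iff]
      exact forall_congr' fun i => by rw [SimpleGraph.mem_neighborFinset, SimpleGraph.adj_comm]
    rw [h2, card_tuples_mem]
    rfl
  -- the bad-set counting
  have hsum2 : ∑ f : Fin t → Fin n,
      ((univ : Finset (Finset (Fin n))).filter
        (fun T => T.card = t ∧ (cN G T).card < M ∧ ∀ x ∈ T, ∀ i, G.Adj x (f i))).card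
      ≤ M ^ t * n ^ t := by
    have h1 : ∀ f : Fin t → Fin n,
        ((univ : Finset (Finset (Fin n))).filter
          (fun T => T.card = t ∧ (cN G T).card < M ∧ ∀ x ∈ T, ∀ i, G.Adj x (f i))).card
        = ∑ T ∈ (univ : Finset (Finset (Fin n))),
            if (T.card = t ∧ (cN G T).card < M ∧ ∀ x ∈ T, ∀ i, G.Adj x (f i)) then 1 else 0 :=
      fun f => Finset.card_filter _ _
    rw [Finset.sum_congr rfl (fun f _ => h1 f), Finset.sum_comm]
    have h2 : ∀ T : Finset (Fin n),
        (∑ f : Fin t → Fin n,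
          if (T.card = t ∧ (cN G T).card < M ∧ ∀ x ∈ T, ∀ i, G.Adj x (f i)) then 1 else 0)
        ≤ if T.card = t then M ^ t else 0 := by
      intro T
      by_cases hbase : T.card = t ∧ (cN G T).card < M
      · calc (∑ f : Fin t → Fin n,
            if (T.card = t ∧ (cN G T).card < M ∧ ∀ x ∈ T, ∀ i, G.Adj x (f i)) then 1 else 0)
            ≤ ∑ f : Fin t → Fin n, if (∀ x ∈ T, ∀ i, G.Adj x (f i)) then 1 else 0 := by
              refine Finset.sum_le_sum (fun f _ => ?_)
              split_ifs with h1 h2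
              · exact le_refl _
              · exact absurd h1.2.2 h2
              · exact Nat.zero_le _
              · exact Nat.zero_le _
          _ = (cN G T).card ^ t := by rw [← key T, Finset.card_filter]
          _ ≤ M ^ t := Nat.pow_le_pow_left (Nat.le_of_lt hbase.2) t
          _ ≤ if T.card = t then M ^ t else 0 := by rw [if_pos hbase.1]
      · have : ∀ f : Fin t → Fin n,
            (if (T.card = t ∧ (cN G T).card < M ∧ ∀ x ∈ T, ∀ i, G.Adj x (f i)) then 1 else 0) = 0 := by
          intro f
          rw [if_neg]
          intro hc
          exact hbase ⟨hc.1, hc.2.1⟩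
        rw [Finset.sum_congr rfl (fun f _ => this f), Finset.sum_const, smul_eq_mul, mul_zero]
        exact Nat.zero_le _
    calc (∑ T ∈ (univ : Finset (Finset (Fin n))), ∑ f : Fin t → Fin n,
          if (T.card = t ∧ (cN G T).card < M ∧ ∀ x ∈ T, ∀ i, G.Adj x (f i)) then 1 else 0)
        ≤ ∑ T ∈ (univ : Finset (Finset (Fin n))), if T.card = t then M ^ t else 0 :=
          Finset.sum_le_sum (fun T _ => h2 T)
      _ = ((univ : Finset (Finset (Fin n))).filter (fun T => T.card = t)).card * M ^ t := by
          rw [← Finset.sum_filter, Finset.sum_const, smul_eq_mul]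
      _ ≤ M ^ t * n ^ t := by
          have hfil : (univ : Finset (Finset (Fin n))).filter (fun T => T.card = t)
              = (univ : Finset (Fin n)).powersetCard t := by
            ext T
            simp [Finset.mem_powersetCard, Finset.subset_univ]
          rw [hfil, Finset.card_powersetCard, Finset.card_univ, Fintype.card_fin, mul_comm]
          exact Nat.mul_le_mul_left _ (Nat.choose_le_pow n t)
  -- find a good tuple f
  have hfne : (univ : Finset (Fin t → Fin n)).Nonempty := by
    have : Nonempty (Fin n) := ⟨⟨0, hn⟩⟩
    exact univ_nonempty
  have hcardfun : (univ : Finset (Fin t → Fin n)).card = n ^ t := by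
    rw [Finset.card_univ, Fintype.card_fun, Fintype.card_fin, Fintype.card_fin]
  have hex : ∃ f : Fin t → Fin n,
      ((univ : Finset (Finset (Fin n))).filter
        (fun T => T.card = t ∧ (cN G T).card < M ∧ ∀ x ∈ T, ∀ i, G.Adj x (f i))).card + u
      ≤ ((univ : Finset (Fin n)).filter (fun v => ∀ i, G.Adj v (f i))).card := by
    by_contra hcon
    push_neg at hcon
    have hlt : ∑ f : Fin t → Fin n,
        ((univ : Finset (Fin n)).filter (fun v => ∀ i, G.Adj v (f i))).card
        < ∑ f : Fin t → Fin n,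
          (((univ : Finset (Finset (Fin n))).filter
            (fun T => T.card = t ∧ (cN G T).card < M ∧ ∀ x ∈ T, ∀ i, G.Adj x (f i))).card + u) :=
      Finset.sum_lt_sum_of_nonempty hfne (fun f _ => hcon f)
    rw [Finset.sum_add_distrib, Finset.sum_const, smul_eq_mul, hcardfun, hsum1] at hlt
    have hfin : (∑ v : Fin n, G.degree v ^ t) < ∑ v : Fin n, G.degree v ^ t :=
      lt_of_lt_of_le hlt (by
        calc (∑ f : Fin t → Fin n,
              ((univ : Finset (Finset (Fin n))).filter
                (fun T => T.card = t ∧ (cN G T).card < M ∧ ∀ x ∈ T, ∀ i, G.Adj x (f i))).card)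
              + n ^ t * u
            ≤ M ^ t * n ^ t + n ^ t * u := Nat.add_le_add_right hsum2 _
          _ = u * n ^ t + M ^ t * n ^ t := by ring
          _ ≤ ∑ v : Fin n, G.degree v ^ t := hsum)
    exact lt_irrefl _ hfin
  obtain ⟨f, hf⟩ := hex
  -- construct U by deleting one vertex from each bad subset
  have hv0 : Nonempty (Fin n) := ⟨⟨0, hn⟩⟩
  set pick : Finset (Fin n) → Fin n :=
    fun T => if h : T.Nonempty then T.min' h else Classical.arbitrary (Fin n) with hpick
  set Uf := (univ : Finset (Fin n)).filter (fun v => ∀ i, G.Adj v (f i)) with hUfdef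
  set Bf := (univ : Finset (Finset (Fin n))).filter
      (fun T => T.card = t ∧ (cN G T).card < M ∧ ∀ x ∈ T, ∀ i, G.Adj x (f i)) with hBfdef
  refine ⟨Uf \ Bf.image pick, ?_, ?_⟩
  · have h1 : (Bf.image pick).card ≤ Bf.card := Finset.card_image_le
    have h2 : Uf.card - (Bf.image pick).card ≤ (Uf \ Bf.image pick).card :=
      Finset.le_card_sdiff _ _
    have h3 : u + (Bf.image pick).card ≤ Uf.card :=
      le_trans (Nat.add_le_add_left h1 u) (by rw [Nat.add_comm]; exact hf)
    exact le_trans (Nat.le_sub_of_add_le' (by rw [Nat.add_comm]; exact h3)) h2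
  · intro T hTsub hTcard
    by_contra hlt
    push_neg at hlt
    have hTUf : T ⊆ Uf := hTsub.trans (Finset.sdiff_subset)
    have hTBf : T ∈ Bf := by
      rw [hBfdef, Finset.mem_filter]
      refine ⟨Finset.mem_univ _, hTcard, hlt, fun x hx i => ?_⟩
      have := Finset.mem_filter.1 (hTUf hx)
      exact this.2 i
    have hTne : T.Nonempty := Finset.card_pos.1 (hTcard ▸ ht)
    have hpickT : pick T ∈ T := by
      rw [hpick]
      simp only [dif_pos hTne]
      exact Finset.min'_mem T hTne
    have hmem : pick T ∈ Uf \ Bf.image pick := hTsub hpickT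
    have : pick T ∈ Bf.image pick := Finset.mem_image_of_mem pick hTBf
    exact (Finset.mem_sdiff.1 hmem).2 this


section Core
variable {n t : ℕ}

lemma build_pattern (R H : SimpleGraph (Fin n)) (hH : H = R ∨ H = Rᶜ) (X Y : Finset (Fin n))
    (hd : Disjoint X Y) (hX : X.card = t) (hY : Y.card = t)
    (hXc : H.IsClique (X : Set (Fin n)))
    (hYc : H.IsClique (Y : Set (Fin n)) ∨ Hᶜ.IsClique (Y : Set (Fin n)))
    (hcross : ∀ x ∈ X, ∀ y ∈ Y, ¬ H.Adj x y) :
    ContainsUnavoidable R t := by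
  refine ⟨X, Y, hd, hX, hY, H, hH, hXc, hYc, fun x hx y hy => ?_⟩
  refine ⟨fun hxy => ?_, hcross x hx y hy⟩
  exact (Finset.disjoint_left.1 hd hx) (hxy ▸ hy)

lemma or_compl_trans {R G H : SimpleGraph (Fin n)} (h1 : H = G ∨ H = Gᶜ)
    (h2 : G = R ∨ G = Rᶜ) : H = R ∨ H = Rᶜ := by
  rcases h1 with rfl | rfl <;> rcases h2 with rfl | rfl
  · exact Or.inl rfl
  · exact Or.inr rfl
  · exact Or.inr rfl
  · exact Or.inl (compl_compl R)

lemma core_lemma (ht : 3 ≤ t) (R G : SimpleGraph (Fin n)) (hG : G = R ∨ G = Rᶜ)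
    (N1 : ℕ) (hN1 : RamseyWitness t t N1)
    (S : Finset (Fin n)) (hSclique : Gᶜ.IsClique (S : Set (Fin n)))
    (hScard : 2*t + 2*t*(Nat.choose (2*t) t) ≤ S.card)
    (U : Finset (Fin n))
    (hUgood : ∀ T ⊆ U, T.card = t → N1 ≤ (cN G T).card)
    (hram : (∃ A ⊆ U, A.card = 2*t ∧ G.IsClique (A : Set (Fin n))) ∨
            (∃ B ⊆ U, B.card = t ∧ Gᶜ.IsClique (B : Set (Fin n)))) :
    ContainsUnavoidable R t := by
  classical
  rcases hram with ⟨A, hAU, hAcard, hAclique⟩ | ⟨B, hBU, hBcard, hBclique⟩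
  · -- case (ii): G-clique of size 2t; use pigeonhole against S
    set S' := S \ A with hS'
    have hS'card : 2*t*(Nat.choose (2*t) t) ≤ S'.card := by
      have h1 : S.card - A.card ≤ S'.card := Finset.le_card_sdiff _ _
      omega
    -- the selection function
    have hchoice : ∀ v : Fin n, ∃ p : Bool × Finset (Fin n),
        p.2 ⊆ A ∧ p.2.card = t ∧
        ∀ x ∈ p.2, (p.1 = true → G.Adj v x) ∧ (p.1 = false → ¬ G.Adj v x) := by
      intro v
      by_cases h : t ≤ (A.filter (fun x => G.Adj v x)).card
      · obtain ⟨X, hX1, hX2⟩ := Finset.exists_subset_card_eq h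
        refine ⟨(true, X), hX1.trans (Finset.filter_subset _ _), hX2, fun x hx => ?_⟩
        exact ⟨fun _ => (Finset.mem_filter.1 (hX1 hx)).2, fun hfalse => by simp at hfalse⟩
      · have hsplit := Finset.card_filter_add_card_filter_not
          (s := A) (p := fun x => G.Adj v x)
        have h' : t ≤ (A.filter (fun x => ¬ G.Adj v x)).card := by omega
        obtain ⟨X, hX1, hX2⟩ := Finset.exists_subset_card_eq h'
        refine ⟨(false, X), hX1.trans (Finset.filter_subset _ _), hX2, fun x hx => ?_⟩
        exact ⟨fun htrue => by simp at htrue, fun _ => (Finset.mem_filter.1 (hX1 hx)).2⟩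
    choose fA hfA1 hfA2 hfA3 using hchoice
    -- pigeonhole
    set target := (Finset.univ : Finset Bool) ×ˢ A.powersetCard t with htarget
    have hmaps : ∀ v ∈ S', fA v ∈ target := by
      intro v _
      rw [htarget, Finset.mem_product]
      exact ⟨Finset.mem_univ _, Finset.mem_powersetCard.2 ⟨hfA1 v, hfA2 v⟩⟩
    have htne : target.Nonempty := by
      obtain ⟨X₀, hX₀1, hX₀2⟩ := Finset.exists_subset_card_eq (show t ≤ A.card by omega)
      refine ⟨(true, X₀), ?_⟩
      rw [htarget, Finset.mem_product]
      exact ⟨Finset.mem_univ _, Finset.mem_powersetCard.2 ⟨hX₀1, hX₀2⟩⟩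
    have htargetcard : target.card * t ≤ S'.card := by
      rw [htarget, Finset.card_product, Finset.card_univ, Fintype.card_bool,
        Finset.card_powersetCard, hAcard]
      calc 2 * (Nat.choose (2*t) t) * t = 2*t*(Nat.choose (2*t) t) := by ring
        _ ≤ S'.card := hS'card
    obtain ⟨p, hp, hfiber⟩ :=
      Finset.exists_le_card_fiber_of_mul_le_card_of_maps_to hmaps htne htargetcard
    obtain ⟨Y, hYsub, hYcard⟩ := Finset.exists_subset_card_eq hfiber
    have hYS' : Y ⊆ S' := hYsub.trans (Finset.filter_subset _ _)
    have hpX : p.2 ⊆ A ∧ p.2.card = t := by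
      have := (Finset.mem_product.1 (htarget ▸ hp)).2
      exact ⟨(Finset.mem_powersetCard.1 this).1, (Finset.mem_powersetCard.1 this).2⟩
    have hYp : ∀ v ∈ Y, fA v = p := fun v hv => (Finset.mem_filter.1 (hYsub hv)).2
    have hdisj : Disjoint p.2 Y :=
      Finset.disjoint_of_subset_left hpX.1
        (Finset.disjoint_of_subset_right hYS' Finset.sdiff_disjoint.symm)
    have hXclique : G.IsClique (p.2 : Set (Fin n)) :=
      hAclique.subset (Finset.coe_subset.2 hpX.1)
    have hYclique : Gᶜ.IsClique (Y : Set (Fin n)) :=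
      hSclique.subset (Finset.coe_subset.2 (hYS'.trans Finset.sdiff_subset))
    -- split on colour
    rcases Bool.eq_false_or_eq_true p.1 with hc | hc
    · -- all cross edges are G: pattern with H := Gᶜ
      refine build_pattern R Gᶜ (or_compl_trans (Or.inr rfl) hG) Y p.2 hdisj.symm hYcard hpX.2
        hYclique (Or.inr (by rw [compl_compl]; exact hXclique)) ?_
      intro y hy x hx hadj
      have h1 := hfA3 y x (by rw [hYp y hy]; exact hx)
      have h2 := h1.1 (by rw [hYp y hy]; exact hc)
      exact hadj.2 h2
    · -- all cross edges are non-G: pattern with H := G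
      refine build_pattern R G hG p.2 Y hdisj hpX.2 hYcard hXclique (Or.inr hYclique) ?_
      intro x hx y hy hadj
      have h1 := hfA3 y x (by rw [hYp y hy]; exact hx)
      have h2 := h1.2 (by rw [hYp y hy]; exact hc)
      exact h2 hadj.symm
  · -- case (i): Gᶜ-clique of size t inside U with large common G-neighbourhood
    have hW : N1 ≤ (cN G B).card := hUgood B hBU hBcard
    rcases hN1 (Fin n) G (cN G B) hW with ⟨Y, hYsub, hYcard, hYclique⟩ | ⟨Y, hYsub, hYcard, hYclique⟩
    · -- Y is a G-clique inside the common G-neighbourhood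
      refine build_pattern R Gᶜ (or_compl_trans (Or.inr rfl) hG) B Y
        (Finset.disjoint_of_subset_right hYsub disjoint_cN) hBcard hYcard hBclique
        (Or.inr (by rw [compl_compl]; exact hYclique)) ?_
      intro x hx y hy hadj
      exact hadj.2 (mem_cN.1 (hYsub hy) x hx)
    · refine build_pattern R Gᶜ (or_compl_trans (Or.inr rfl) hG) B Y
        (Finset.disjoint_of_subset_right hYsub disjoint_cN) hBcard hYcard hBclique
        (Or.inl hYclique) ?_
      intro x hx y hy hadj
      exact hadj.2 (mem_cN.1 (hYsub hy) x hx)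

end Core

/-- **Theorem (Girão–Narayanan).** For each `t ≥ 3` there is `C = C(t) > 0` such that every
red/blue colouring of `K_n` with `n ≥ C` in which each colour appears on at least
`C·n^{2 - 1/t}` edges contains an unavoidable `t`-colouring. -/
theorem statement0 :
    ∀ t : ℕ, 3 ≤ t →
      ∃ C : ℝ, 0 < C ∧
        ∀ (n : ℕ) (R : SimpleGraph (Fin n)),
          C ≤ (n : ℝ) →
          C * (n : ℝ) ^ ((2 : ℝ) - 1 / (t : ℝ)) ≤ (R.edgeSet.ncard : ℝ) →
          C * (n : ℝ) ^ ((2 : ℝ) - 1 / (t : ℝ)) ≤ (Rᶜ.edgeSet.ncard : ℝ) →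
          ContainsUnavoidable R t := by
  classical
  intro t ht
  have ht0 : t ≠ 0 := by omega
  obtain ⟨N1, hN1⟩ := ramsey_exists (t + t) t t le_rfl
  obtain ⟨N2, hN2⟩ := ramsey_exists (2*t + t) (2*t) t le_rfl
  set s₀ := 2*t + 2*t*(Nat.choose (2*t) t) with hs₀def
  obtain ⟨N3, hN3⟩ := ramsey_exists (s₀ + s₀) s₀ s₀ le_rfl
  set Cn : ℕ := N3 + N2 + N1^t + 1 with hCndef
  have hCnpos : 0 < Cn := by omega
  refine ⟨(Cn : ℝ), by exact_mod_cast hCnpos, ?_⟩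
  intro n R hCnle hred hblue
  have hnC : Cn ≤ n := by exact_mod_cast hCnle
  have hn1 : 1 ≤ n := by omega
  have htR : (t:ℝ) ≠ 0 := Nat.cast_ne_zero.2 ht0
  -- the main argument, for the colour `G` opposite to a big monochromatic clique
  have hmain : ∀ G : SimpleGraph (Fin n), (G = R ∨ G = Rᶜ) →
      (Cn : ℝ) * (n:ℝ) ^ ((2:ℝ) - 1/(t:ℝ)) ≤ (G.edgeSet.ncard : ℝ) →
      (∃ S : Finset (Fin n), s₀ ≤ S.card ∧ Gᶜ.IsClique (S : Set (Fin n))) →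
      ContainsUnavoidable R t := by
    rintro G hG hedge ⟨S, hScard, hSclique⟩
    -- degree sum is twice the number of edges
    have hdegsum : (∑ v : Fin n, (G.degree v : ℝ)) = 2 * (G.edgeSet.ncard : ℝ) := by
      have h1 : G.edgeSet.ncard = G.edgeFinset.card := by
        rw [← SimpleGraph.coe_edgeFinset, Set.ncard_coe_finset]
      rw [h1]
      exact_mod_cast SimpleGraph.sum_degrees_eq_twice_card_edges G
    -- power-mean inequality
    have hpm : (∑ v : Fin n, (G.degree v : ℝ)) ^ t / (n:ℝ)^(t-1)
        ≤ ∑ v : Fin n, (G.degree v : ℝ)^t := by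
      have h := pow_sum_div_card_le_sum_pow (s := (univ : Finset (Fin n)))
        (f := fun v => (G.degree v : ℝ)) (fun i _ => Nat.cast_nonneg _) (t-1)
      rwa [Finset.card_univ, Fintype.card_fin, Nat.sub_add_cancel (by omega : 1 ≤ t)] at h
    -- lower bound for the degree sum
    have hbase : (2*(Cn:ℝ)) * (n:ℝ) ^ ((2:ℝ) - 1/(t:ℝ)) ≤ ∑ v : Fin n, (G.degree v : ℝ) := by
      rw [hdegsum, mul_assoc]
      have := mul_le_mul_of_nonneg_left hedge (by norm_num : (0:ℝ) ≤ 2)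
      linarith
    have hpow : ((2*(Cn:ℝ)) * (n:ℝ) ^ ((2:ℝ) - 1/(t:ℝ)))^t
        ≤ (∑ v : Fin n, (G.degree v:ℝ))^t :=
      pow_le_pow_left₀ (by positivity) hbase t
    have hexp : ((n:ℝ) ^ ((2:ℝ) - 1/(t:ℝ)))^t = (n:ℝ)^(2*t-1) := by
      rw [← Real.rpow_natCast ((n:ℝ) ^ ((2:ℝ) - 1/(t:ℝ))) t,
        ← Real.rpow_mul (Nat.cast_nonneg n)]
      have h4 : ((2:ℝ) - 1/(t:ℝ)) * (t:ℝ) = 2*(t:ℝ) - 1 := by field_simp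
      have h5 : ((2*t - 1 : ℕ) : ℝ) = 2*(t:ℝ) - 1 := by
        rw [Nat.cast_sub (by omega : 1 ≤ 2*t)]; push_cast; ring
      rw [h4, ← h5, Real.rpow_natCast]
    have hsplit : (n:ℝ)^(2*t-1) = (n:ℝ)^t * (n:ℝ)^(t-1) := by
      rw [← pow_add]; congr 1; omega
    have hnpos : (0:ℝ) < ((n:ℝ)^(t-1)) := by
      have : (0:ℝ) < (n:ℝ) := by exact_mod_cast hn1
      positivity
    have hnne : ((n:ℝ)^(t-1)) ≠ 0 := ne_of_gt hnpos
    have h6 : (2*(Cn:ℝ))^t * (n:ℝ)^t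
        = ((2*(Cn:ℝ)) * (n:ℝ)^((2:ℝ)-1/(t:ℝ)))^t / (n:ℝ)^(t-1) := by
      simp only [mul_pow]
      rw [hexp, hsplit]
      field_simp
    have h7 : ((2*(Cn:ℝ)) * (n:ℝ)^((2:ℝ)-1/(t:ℝ)))^t / (n:ℝ)^(t-1)
        ≤ (∑ v : Fin n, (G.degree v:ℝ))^t / (n:ℝ)^(t-1) :=
      div_le_div_of_nonneg_right hpow hnpos.le
    have hfinal : (2*(Cn:ℝ))^t * (n:ℝ)^t ≤ ∑ v : Fin n, (G.degree v : ℝ)^t :=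
      le_trans (le_of_eq h6) (le_trans h7 hpm)
    -- cast to ℕ
    have hCge : (N2 : ℝ) + (N1:ℝ)^t ≤ 2*(Cn:ℝ) := by
      have h8 : (N2 + N1^t : ℕ) ≤ 2*Cn := by omega
      exact_mod_cast h8
    have h2C : 2*(Cn:ℝ) ≤ (2*(Cn:ℝ))^t := by
      apply le_self_pow₀ _ ht0
      have : (1:ℝ) ≤ (Cn:ℝ) := by exact_mod_cast hCnpos
      linarith
    have hnat : ((N2 * n^t + N1^t * n^t : ℕ) : ℝ) ≤ ((∑ v : Fin n, (G.degree v)^t : ℕ) : ℝ) := by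
      push_cast
      calc (N2:ℝ) * (n:ℝ)^t + (N1:ℝ)^t * (n:ℝ)^t = ((N2:ℝ) + (N1:ℝ)^t) * (n:ℝ)^t := by ring
        _ ≤ (2*(Cn:ℝ))^t * (n:ℝ)^t :=
            mul_le_mul_of_nonneg_right (le_trans hCge h2C) (by positivity)
        _ ≤ ∑ v : Fin n, (G.degree v:ℝ)^t := hfinal
    have hsum : N2 * n^t + N1^t * n^t ≤ ∑ v : Fin n, (G.degree v)^t := by
      exact_mod_cast hnat
    obtain ⟨U, hUcard, hUgood⟩ := drc G t N1 N2 (by omega) (by omega) hsum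
    exact core_lemma ht R G hG N1 hN1 S hSclique hScard U hUgood (hN2 (Fin n) G U hUcard)
  -- find the big monochromatic clique
  have huniv : N3 ≤ (univ : Finset (Fin n)).card := by
    rw [Finset.card_univ, Fintype.card_fin]; omega
  rcases hN3 (Fin n) R univ huniv with ⟨S, _, hScard, hSclique⟩ | ⟨S, _, hScard, hSclique⟩
  · exact hmain Rᶜ (Or.inr rfl) hblue ⟨S, hScard.symm.le, by rw [compl_compl]; exact hSclique⟩
  · exact hmain R (Or.inl rfl) hred ⟨S, hScard.symm.le, hSclique⟩
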